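/- Let f : {0,1}^n → {0,1} be a Boolean function. Then Pat(f) ≤ 2·6^{spar(f)/3}, i.e., the Möbius pattern complexity of f is at most 2^{((log₂6)/3)·spar(f) + 1}. -/

import Mathlib

/-- `AND_S(x) = ∏_{i ∈ S} x_i` as a real number. -/
def andR {n : ℕ} (S : Finset (Fin n)) (x : Fin n → Bool) : ℝ :=
  ∏ i ∈ S, (if x i then (1 : ℝ) else 0)

/-- `AND_S(x)` as a Boolean. -/
def andB {n : ℕ} (S : Finset (Fin n)) (x : Fin n → Bool) : Bool :=
  decide (∀ i ∈ S, x i = true)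


noncomputable def Xc : ℝ := (6 : ℝ) ^ ((1:ℝ)/3)

lemma Xc_nonneg : 0 ≤ Xc := Real.rpow_nonneg (by norm_num) _

lemma Xc_cube : Xc ^ (3:ℕ) = 6 := by
  rw [Xc, ← Real.rpow_natCast ((6:ℝ) ^ ((1:ℝ)/3)) 3,
    ← Real.rpow_mul (by norm_num : (0:ℝ) ≤ 6)]
  norm_num

lemma Xc_lb : (1.81:ℝ) ≤ Xc := by
  by_contra h
  push_neg at h
  have h3 : Xc ^ (3:ℕ) < (1.81:ℝ)^(3:ℕ) :=
    pow_lt_pow_left₀ h Xc_nonneg (by norm_num)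
  rw [Xc_cube] at h3
  norm_num at h3

lemma Xc_ub : Xc ≤ (1.82:ℝ) := by
  by_contra h
  push_neg at h
  have h3 : (1.82:ℝ)^(3:ℕ) < Xc ^ (3:ℕ) :=
    pow_lt_pow_left₀ h (by norm_num) (by norm_num)
  rw [Xc_cube] at h3
  norm_num at h3

lemma one_le_Xc : (1:ℝ) ≤ Xc := le_trans (by norm_num) Xc_lb

lemma one_le_Xc_pow (k : ℕ) : (1:ℝ) ≤ Xc ^ k := one_le_pow₀ one_le_Xc

lemma Xc_pow_mono {a b : ℕ} (h : a ≤ b) : Xc ^ a ≤ Xc ^ b :=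
  pow_le_pow_right₀ one_le_Xc h

section CoreDef
variable {ι : Type*} [DecidableEq ι]

/-- A valid configuration: an intersection-closed family of subsets of `I`,
with nonzero weights, all of whose member-sums lie in `{γ, γ+1}`. -/
def GoodCfg (I : Finset ι) (𝒜 : Finset (Finset ι)) (c : ι → ℝ) (γ : ℝ) : Prop :=
  (∀ A ∈ 𝒜, A ⊆ I) ∧ (∀ i ∈ I, c i ≠ 0) ∧
  (∀ A ∈ 𝒜, ∀ B ∈ 𝒜, A ∩ B ∈ 𝒜) ∧
  (∀ A ∈ 𝒜, (∑ i ∈ A, c i) = γ ∨ (∑ i ∈ A, c i) = γ + 1)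

lemma fiber_good {I : Finset ι} {𝒜 : Finset (Finset ι)} {c : ι → ℝ} {γ : ℝ}
    (hG : GoodCfg I 𝒜 c γ) (U B : Finset ι) (hUI : U ⊆ I) (hBU : B ⊆ U) :
    ((𝒜.filter (fun A => A ∩ U = B)).card
      = ((𝒜.filter (fun A => A ∩ U = B)).image (fun A => A \ U)).card)
    ∧ GoodCfg (I \ U) ((𝒜.filter (fun A => A ∩ U = B)).image (fun A => A \ U)) c
        (γ - ∑ i ∈ B, c i) := by
  obtain ⟨hsub, hc, hcl, hval⟩ := hG
  set F := 𝒜.filter (fun A => A ∩ U = B) with hF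
  have hmemF : ∀ A ∈ F, A ∈ 𝒜 ∧ A ∩ U = B := by
    intro A hA; simpa [hF] using hA
  constructor
  · symm
    apply Finset.card_image_of_injOn
    intro A₁ h₁ A₂ h₂ he
    have e₁ := (hmemF A₁ h₁).2
    have e₂ := (hmemF A₂ h₂).2
    calc A₁ = A₁ \ U ∪ A₁ ∩ U := (Finset.sdiff_union_inter A₁ U).symm
      _ = A₂ \ U ∪ A₂ ∩ U := by
          simp only at he; rw [he, e₁, e₂]
      _ = A₂ := Finset.sdiff_union_inter A₂ U
  · refine ⟨?_, ?_, ?_, ?_⟩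
    · intro A hA
      obtain ⟨A₀, hA₀, rfl⟩ := Finset.mem_image.mp hA
      exact Finset.sdiff_subset_sdiff (hsub _ (hmemF _ hA₀).1) le_rfl
    · intro i hi; exact hc i (Finset.mem_sdiff.mp hi).1
    · intro A hA B' hB'
      obtain ⟨A₁, h₁, rfl⟩ := Finset.mem_image.mp hA
      obtain ⟨A₂, h₂, rfl⟩ := Finset.mem_image.mp hB'
      have h12 : A₁ ∩ A₂ ∈ F := by
        rw [hF, Finset.mem_filter]
        refine ⟨hcl _ (hmemF _ h₁).1 _ (hmemF _ h₂).1, ?_⟩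
        have e₁ := (hmemF _ h₁).2
        have e₂ := (hmemF _ h₂).2
        ext x
        constructor
        · intro hx
          simp only [Finset.mem_inter] at hx
          rw [← e₁]
          exact Finset.mem_inter.mpr ⟨hx.1.1, hx.2⟩
        · intro hxB
          have hx1 : x ∈ A₁ ∩ U := by rw [e₁]; exact hxB
          have hx2 : x ∈ A₂ ∩ U := by rw [e₂]; exact hxB
          simp only [Finset.mem_inter] at hx1 hx2 ⊢
          exact ⟨⟨hx1.1, hx2.1⟩, hx1.2⟩
      have heq : A₁ \ U ∩ (A₂ \ U) = (A₁ ∩ A₂) \ U := by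
        ext x
        simp only [Finset.mem_sdiff, Finset.mem_inter]
        tauto
      rw [heq]
      exact Finset.mem_image_of_mem _ h12
    · intro A hA
      obtain ⟨A₁, h₁, rfl⟩ := Finset.mem_image.mp hA
      have e₁ := (hmemF _ h₁).2
      have hBA : B ⊆ A₁ := by
        rw [← e₁]; exact Finset.inter_subset_left
      have hAU : A₁ \ U = A₁ \ B := by
        ext x
        simp only [Finset.mem_sdiff]
        constructor
        · rintro ⟨hx, hxU⟩; exact ⟨hx, fun hxB => hxU (hBU hxB)⟩
        · rintro ⟨hx, hxB⟩
          refine ⟨hx, fun hxU => hxB ?_⟩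
          rw [← e₁]; exact Finset.mem_inter.mpr ⟨hx, hxU⟩
      have hsumsplit : (∑ i ∈ A₁ \ B, c i) + (∑ i ∈ B, c i) = ∑ i ∈ A₁, c i :=
        Finset.sum_sdiff hBA
      rcases hval _ (hmemF _ h₁).1 with h | h
      · left; rw [hAU]; linarith
      · right; rw [hAU]; linarith


lemma core_zero {n : ℕ}
    (IH : ∀ (I : Finset ι) (𝒜 : Finset (Finset ι)) (c : ι → ℝ) (γ : ℝ),
      I.card ≤ n → GoodCfg I 𝒜 c γ → (𝒜.card : ℝ) ≤ 2 * Xc ^ I.card)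
    (I : Finset ι) (𝒜 : Finset (Finset ι)) (c : ι → ℝ)
    (hn : I.card ≤ n + 1) (hG : GoodCfg I 𝒜 c 0) :
    (𝒜.card : ℝ) ≤ 2 * Xc ^ I.card := by
  classical
  obtain ⟨hsub, hc, hcl, hval⟩ := hG
  have hG' : GoodCfg I 𝒜 c 0 := ⟨hsub, hc, hcl, hval⟩
  set m := I.card with hm
  have FIB : ∀ U B : Finset ι, U ⊆ I → U.Nonempty → B ⊆ U →
      ((𝒜.filter (fun A => A ∩ U = B)).card : ℝ) ≤ 2 * Xc ^ (m - U.card) := by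
    intro U B hUI hUne hBU
    obtain ⟨hcard, hgood⟩ := fiber_good hG' U B hUI hBU
    rw [hcard]
    have hle : (I \ U).card ≤ n := by
      rw [Finset.card_sdiff_of_subset hUI]
      have h1 : 1 ≤ U.card := Finset.card_pos.mpr hUne
      have h2 : U.card ≤ I.card := Finset.card_le_card hUI
      omega
    have := IH _ _ _ _ hle hgood
    rwa [Finset.card_sdiff_of_subset hUI] at this
  -- trivial case
  by_cases h1 : 𝒜.card ≤ 1
  · calc (𝒜.card : ℝ) ≤ 1 := by exact_mod_cast h1
      _ ≤ 2 * Xc ^ m := by nlinarith [one_le_Xc_pow m]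
  -- there is a nonempty member
  push_neg at h1
  have hA1 : ∃ A ∈ 𝒜, A.Nonempty := by
    by_contra hcon
    push_neg at hcon
    have : 𝒜 ⊆ {∅} := by
      intro A hA
      have := hcon A hA
      simp [this]
    have := Finset.card_le_card this
    simp at this
    omega
  obtain ⟨A₁, hA₁mem, hA₁ne⟩ := hA1
  -- H : every nonempty member contains an atom-singleton
  by_cases hH : ∀ A ∈ 𝒜, A.Nonempty → ∃ i ∈ A, {i} ∈ 𝒜
  · obtain ⟨i, hiA₁, hi𝒜⟩ := hH A₁ hA₁mem hA₁ne
    have hiI : i ∈ I := hsub _ hi𝒜 (Finset.mem_singleton_self i)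
    have hm1 : 1 ≤ m := Finset.card_pos.mpr ⟨i, hiI⟩
    have hci : c i = 1 := by
      rcases hval _ hi𝒜 with h | h <;> rw [Finset.sum_singleton] at h
      · exact absurd h (hc i hiI)
      · linarith
    by_cases hj : ∃ j, {j} ∈ 𝒜 ∧ j ≠ i
    · -- two atoms
      obtain ⟨j, hj𝒜, hji⟩ := hj
      have hjI : j ∈ I := hsub _ hj𝒜 (Finset.mem_singleton_self j)
      have hcj : c j = 1 := by
        rcases hval _ hj𝒜 with h | h <;> rw [Finset.sum_singleton] at h
        · exact absurd h (hc j hjI)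
        · linarith
      have hijI : ({i, j} : Finset ι) ⊆ I := by
        intro x hx
        rcases Finset.mem_insert.mp hx with h | h
        · exact h ▸ hiI
        · exact (Finset.mem_singleton.mp h) ▸ hjI
      have hm2 : 2 ≤ m := by
        have : ({i, j} : Finset ι).card = 2 := by
          rw [Finset.card_insert_of_notMem (Finset.notMem_singleton.mpr (Ne.symm hji)),
            Finset.card_singleton]
        calc 2 = ({i, j} : Finset ι).card := this.symm
          _ ≤ m := Finset.card_le_card hijI
      by_cases hco : ∃ A ∈ 𝒜, i ∈ A ∧ j ∈ A
      · -- co-occurrence: build the minimal co-occurrence set U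
        obtain ⟨A₂, hA₂mem, hiA₂, hjA₂⟩ := hco
        set s : Finset (Finset ι) := 𝒜.filter (fun A => i ∈ A ∧ j ∈ A) with hs
        have hsne : s.Nonempty := ⟨A₂, by simp [hs, hA₂mem, hiA₂, hjA₂]⟩
        set U := s.inf' hsne id with hUdef
        have hU𝒜 : U ∈ 𝒜 := by
          apply Finset.inf'_mem (↑𝒜 : Set (Finset ι))
            (fun x hx y hy => hcl x hx y hy) s hsne id
          intro A hA
          exact (Finset.mem_filter.mp hA).1
        have hiU : i ∈ U := by
          have hle : ({i} : Finset ι) ≤ U := by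
            apply Finset.le_inf'
            intro A hA
            exact Finset.singleton_subset_iff.mpr (Finset.mem_filter.mp hA).2.1
          exact Finset.singleton_subset_iff.mp hle
        have hjU : j ∈ U := by
          have hle : ({j} : Finset ι) ≤ U := by
            apply Finset.le_inf'
            intro A hA
            exact Finset.singleton_subset_iff.mpr (Finset.mem_filter.mp hA).2.2
          exact Finset.singleton_subset_iff.mp hle
        have hUle : ∀ A ∈ 𝒜, i ∈ A → j ∈ A → U ⊆ A := by
          intro A hA hiA hjA
          exact Finset.inf'_le id (Finset.mem_filter.mpr ⟨hA, hiA, hjA⟩)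
        have hUI : U ⊆ I := hsub _ hU𝒜
        have hUne : U.Nonempty := ⟨i, hiU⟩
        have hkex : (U \ ({i, j} : Finset ι)).Nonempty := by
          rw [Finset.sdiff_nonempty]
          intro hUij
          have hUeq : U = ({i, j} : Finset ι) := Finset.Subset.antisymm hUij (by
            intro x hx
            rcases Finset.mem_insert.mp hx with h | h
            · exact h ▸ hiU
            · exact (Finset.mem_singleton.mp h) ▸ hjU)
          have hsum2 : ∑ x ∈ U, c x = 2 := by
            rw [hUeq, Finset.sum_insert (Finset.notMem_singleton.mpr (Ne.symm hji)),
              Finset.sum_singleton, hci, hcj]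
            norm_num
          rcases hval _ hU𝒜 with h | h <;> rw [hsum2] at h <;> norm_num at h
        obtain ⟨k, hk⟩ := hkex
        have hkU : k ∈ U := (Finset.mem_sdiff.mp hk).1
        have hknotij : k ∉ ({i, j} : Finset ι) := (Finset.mem_sdiff.mp hk).2
        have hki : k ≠ i := fun h => hknotij (by simp [h])
        have hkj : k ≠ j := fun h => hknotij (by simp [h])
        have hinotjk : i ∉ ({j, k} : Finset ι) := by
          simp only [Finset.mem_insert, Finset.mem_singleton]
          push_neg
          exact ⟨Ne.symm hji, Ne.symm hki⟩
        have hjnotk : j ∉ ({k} : Finset ι) := Finset.notMem_singleton.mpr (Ne.symm hkj)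
        have hijk : ({i, j, k} : Finset ι) ⊆ U := by
          intro x hx
          rcases Finset.mem_insert.mp hx with h | h
          · exact h ▸ hiU
          rcases Finset.mem_insert.mp h with h' | h'
          · exact h' ▸ hjU
          · exact (Finset.mem_singleton.mp h') ▸ hkU
        have hcard3 : ({i, j, k} : Finset ι).card = 3 := by
          rw [Finset.card_insert_of_notMem hinotjk, Finset.card_insert_of_notMem hjnotk,
            Finset.card_singleton]
        have h3le : 3 ≤ U.card := hcard3 ▸ Finset.card_le_card hijk
        have hum : U.card ≤ m := Finset.card_le_card hUI
        by_cases hu3 : U.card = 3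
        · -- |U| = 3 : six possible traces on U
          have hUeq : ({i, j, k} : Finset ι) = U :=
            Finset.eq_of_subset_of_card_le hijk (by omega)
          have hsumU : ∑ x ∈ U, c x = 2 + c k := by
            rw [← hUeq, Finset.sum_insert hinotjk, Finset.sum_insert hjnotk,
              Finset.sum_singleton, hci, hcj]
            ring
          have hckval : c k = -2 ∨ c k = -1 := by
            rcases hval _ hU𝒜 with h | h <;> rw [hsumU] at h
            · left; linarith
            · right; linarith
          have hknot𝒜 : ({k} : Finset ι) ∉ 𝒜 := by
            intro hmem
            rcases hval _ hmem with h | h <;> rw [Finset.sum_singleton] at h <;>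
              rcases hckval with h' | h' <;> linarith
          set 𝒯 := 𝒜.image (fun A => A ∩ U) with h𝒯
          have hsub6 : 𝒯 ⊆ ({∅, {i}, {j}, {i, k}, {j, k}, U} : Finset (Finset ι)) := by
            intro B hB
            obtain ⟨A, hA, rfl⟩ := Finset.mem_image.mp hB
            have hB𝒜 : A ∩ U ∈ 𝒜 := hcl _ hA _ hU𝒜
            have hBU : A ∩ U ⊆ U := Finset.inter_subset_right
            simp only [Finset.mem_insert, Finset.mem_singleton]
            by_cases hiA : i ∈ A
            · by_cases hjA : j ∈ A
              · -- both: trace is U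
                have : U ⊆ A := hUle A hA hiA hjA
                right; right; right; right; right
                exact Finset.inter_eq_right.mpr this
              · by_cases hkA : k ∈ A
                · -- trace {i,k}
                  right; right; right; left
                  ext x
                  simp only [Finset.mem_inter, Finset.mem_insert, Finset.mem_singleton]
                  constructor
                  · rintro ⟨hxA, hxU⟩
                    rw [← hUeq] at hxU
                    simp only [Finset.mem_insert, Finset.mem_singleton] at hxU
                    rcases hxU with rfl | rfl | rfl
                    · exact Or.inl rfl
                    · exact absurd hxA hjA
                    · exact Or.inr rfl
                  · rintro (rfl | rfl)
                    · exact ⟨hiA, hiU⟩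
                    · exact ⟨hkA, hkU⟩
                · -- trace {i}
                  right; left
                  ext x
                  simp only [Finset.mem_inter, Finset.mem_singleton]
                  constructor
                  · rintro ⟨hxA, hxU⟩
                    rw [← hUeq] at hxU
                    simp only [Finset.mem_insert, Finset.mem_singleton] at hxU
                    rcases hxU with rfl | rfl | rfl
                    · rfl
                    · exact absurd hxA hjA
                    · exact absurd hxA hkA
                  · rintro rfl
                    exact ⟨hiA, hiU⟩
            · by_cases hjA : j ∈ A
              · by_cases hkA : k ∈ A
                · -- trace {j,k}
                  right; right; right; right; left
                  ext x
                  simp only [Finset.mem_inter, Finset.mem_insert, Finset.mem_singleton]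
                  constructor
                  · rintro ⟨hxA, hxU⟩
                    rw [← hUeq] at hxU
                    simp only [Finset.mem_insert, Finset.mem_singleton] at hxU
                    rcases hxU with rfl | rfl | rfl
                    · exact absurd hxA hiA
                    · exact Or.inl rfl
                    · exact Or.inr rfl
                  · rintro (rfl | rfl)
                    · exact ⟨hjA, hjU⟩
                    · exact ⟨hkA, hkU⟩
                · -- trace {j}
                  right; right; left
                  ext x
                  simp only [Finset.mem_inter, Finset.mem_singleton]
                  constructor
                  · rintro ⟨hxA, hxU⟩
                    rw [← hUeq] at hxU
                    simp only [Finset.mem_insert, Finset.mem_singleton] at hxU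
                    rcases hxU with rfl | rfl | rfl
                    · exact absurd hxA hiA
                    · rfl
                    · exact absurd hxA hkA
                  · rintro rfl
                    exact ⟨hjA, hjU⟩
              · by_cases hkA : k ∈ A
                · -- trace would be {k} : impossible
                  exfalso
                  have hBk : A ∩ U = ({k} : Finset ι) := by
                    ext x
                    simp only [Finset.mem_inter, Finset.mem_singleton]
                    constructor
                    · rintro ⟨hxA, hxU⟩
                      rw [← hUeq] at hxU
                      simp only [Finset.mem_insert, Finset.mem_singleton] at hxU
                      rcases hxU with rfl | rfl | rfl
                      · exact absurd hxA hiA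
                      · exact absurd hxA hjA
                      · rfl
                    · rintro rfl
                      exact ⟨hkA, hkU⟩
                  rw [hBk] at hB𝒜
                  exact hknot𝒜 hB𝒜
                · -- trace ∅
                  left
                  ext x
                  simp only [Finset.mem_inter, Finset.notMem_empty, iff_false, not_and]
                  intro hxA hxU
                  rw [← hUeq] at hxU
                  simp only [Finset.mem_insert, Finset.mem_singleton] at hxU
                  rcases hxU with rfl | rfl | rfl
                  · exact hiA hxA
                  · exact hjA hxA
                  · exact hkA hxA
          have h𝒯card : 𝒯.card ≤ 6 := by
            refine le_trans (Finset.card_le_card hsub6) ?_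
            refine le_trans (Finset.card_insert_le _ _) (Nat.succ_le_succ ?_)
            refine le_trans (Finset.card_insert_le _ _) (Nat.succ_le_succ ?_)
            refine le_trans (Finset.card_insert_le _ _) (Nat.succ_le_succ ?_)
            refine le_trans (Finset.card_insert_le _ _) (Nat.succ_le_succ ?_)
            refine le_trans (Finset.card_insert_le _ _) (Nat.succ_le_succ ?_)
            simp
          have hpart : 𝒜.card = ∑ B ∈ 𝒯, (𝒜.filter (fun A => A ∩ U = B)).card :=
            Finset.card_eq_sum_card_fiberwise (fun A hA => Finset.mem_image_of_mem _ hA)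
          have hposX : (0:ℝ) < Xc ^ (m - 3) := lt_of_lt_of_le one_pos (one_le_Xc_pow _)
          have hsumb : (𝒜.card : ℝ) ≤ (𝒯.card : ℝ) * (2 * Xc ^ (m - 3)) := by
            rw [hpart]
            push_cast
            calc ∑ B ∈ 𝒯, ((𝒜.filter (fun A => A ∩ U = B)).card : ℝ)
                ≤ ∑ _B ∈ 𝒯, 2 * Xc ^ (m - 3) := by
                  apply Finset.sum_le_sum
                  intro B hB
                  obtain ⟨A, hA, rfl⟩ := Finset.mem_image.mp hB
                  have := FIB U (A ∩ U) hUI hUne Finset.inter_subset_right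
                  rwa [hu3] at this
              _ = (𝒯.card : ℝ) * (2 * Xc ^ (m - 3)) := by
                  rw [Finset.sum_const, nsmul_eq_mul]
          have hXm : Xc ^ (m - 3) * Xc ^ 3 = Xc ^ m := by
            rw [← pow_add]; congr 1; omega
          calc (𝒜.card : ℝ) ≤ (𝒯.card : ℝ) * (2 * Xc ^ (m - 3)) := hsumb
            _ ≤ 6 * (2 * Xc ^ (m - 3)) := by
                apply mul_le_mul_of_nonneg_right _ (by positivity)
                exact_mod_cast h𝒯card
            _ = 2 * (Xc ^ (m - 3) * Xc ^ 3) := by rw [Xc_cube]; ring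
            _ = 2 * Xc ^ m := by rw [hXm]
        · -- |U| ≥ 4 : three groups
          have hu4 : 4 ≤ U.card := by omega
          have hm4 : 4 ≤ m := le_trans hu4 hum
          have hcover : 𝒜 ⊆ 𝒜.filter (fun A => A ∩ {i} = ∅)
              ∪ 𝒜.filter (fun A => A ∩ {i, j} = {i})
              ∪ 𝒜.filter (fun A => A ∩ U = U) := by
            intro A hA
            by_cases hiA : i ∈ A
            · by_cases hjA : j ∈ A
              · apply Finset.mem_union_right
                refine Finset.mem_filter.mpr ⟨hA, ?_⟩
                exact Finset.inter_eq_right.mpr (hUle A hA hiA hjA)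
              · apply Finset.mem_union_left
                apply Finset.mem_union_right
                refine Finset.mem_filter.mpr ⟨hA, ?_⟩
                ext x
                simp only [Finset.mem_inter, Finset.mem_insert, Finset.mem_singleton]
                constructor
                · rintro ⟨hxA, rfl | rfl⟩
                  · rfl
                  · exact absurd hxA hjA
                · rintro rfl
                  exact ⟨hiA, Or.inl rfl⟩
            · apply Finset.mem_union_left
              apply Finset.mem_union_left
              refine Finset.mem_filter.mpr ⟨hA, ?_⟩
              ext x
              simp only [Finset.mem_inter, Finset.mem_singleton, Finset.notMem_empty,
                iff_false, not_and]
              rintro hxA rfl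
              exact hiA hxA
          have hiI' : ({i} : Finset ι) ⊆ I := Finset.singleton_subset_iff.mpr hiI
          have hb1 := FIB {i} ∅ hiI' ⟨i, Finset.mem_singleton_self i⟩ (Finset.empty_subset _)
          rw [Finset.card_singleton] at hb1
          have hb2 := FIB {i, j} {i} hijI ⟨i, by simp⟩
            (by intro x hx; rw [Finset.mem_singleton] at hx; simp [hx])
          have hc2 : ({i, j} : Finset ι).card = 2 := by
            rw [Finset.card_insert_of_notMem (Finset.notMem_singleton.mpr (Ne.symm hji)),
              Finset.card_singleton]
          rw [hc2] at hb2
          have hb3 := FIB U U hUI hUne le_rfl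
          have hb3' : ((𝒜.filter (fun A => A ∩ U = U)).card : ℝ) ≤ 2 * Xc ^ (m - 4) := by
            refine le_trans hb3 ?_
            have := Xc_pow_mono (show m - U.card ≤ m - 4 by omega)
            linarith
          have hcards : (𝒜.card : ℝ) ≤ ((𝒜.filter (fun A => A ∩ {i} = ∅)).card : ℝ)
              + ((𝒜.filter (fun A => A ∩ {i, j} = {i})).card : ℝ)
              + ((𝒜.filter (fun A => A ∩ U = U)).card : ℝ) := by
            have hcc := Finset.card_le_card hcover
            have h2 := Finset.card_union_le (𝒜.filter (fun A => A ∩ ({i} : Finset ι) = ∅)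
              ∪ 𝒜.filter (fun A => A ∩ {i, j} = {i})) (𝒜.filter (fun A => A ∩ U = U))
            have h3 := Finset.card_union_le (𝒜.filter (fun A => A ∩ ({i} : Finset ι) = ∅))
              (𝒜.filter (fun A => A ∩ {i, j} = {i}))
            have : 𝒜.card ≤ (𝒜.filter (fun A => A ∩ ({i} : Finset ι) = ∅)).card
                + (𝒜.filter (fun A => A ∩ {i, j} = {i})).card
                + (𝒜.filter (fun A => A ∩ U = U)).card := by omega
            exact_mod_cast this
          have e1 : Xc ^ (m - 1) = Xc ^ (m - 4) * Xc ^ 3 := by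
            rw [← pow_add]; congr 1; omega
          have e2 : Xc ^ (m - 2) = Xc ^ (m - 4) * Xc ^ 2 := by
            rw [← pow_add]; congr 1; omega
          have em : Xc ^ m = Xc ^ (m - 4) * (Xc ^ 3 * Xc) := by
            rw [← pow_succ, ← pow_add]; congr 1; omega
          have hposX : (0:ℝ) < Xc ^ (m - 4) := lt_of_lt_of_le one_pos (one_le_Xc_pow _)
          have harith : Xc ^ 3 + Xc ^ 2 + 1 ≤ Xc ^ 3 * Xc := by
            rw [Xc_cube]
            nlinarith [Xc_lb, Xc_ub, mul_nonneg (sub_nonneg.mpr Xc_lb) (sub_nonneg.mpr Xc_ub)]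
          calc (𝒜.card : ℝ) ≤ 2 * Xc ^ (m - 1) + 2 * Xc ^ (m - 2) + 2 * Xc ^ (m - 4) := by
                linarith
            _ = 2 * (Xc ^ (m - 4) * (Xc ^ 3 + Xc ^ 2 + 1)) := by rw [e1, e2]; ring
            _ ≤ 2 * (Xc ^ (m - 4) * (Xc ^ 3 * Xc)) := by nlinarith
            _ = 2 * Xc ^ m := by rw [em]
      · -- no co-occurrence : three fibers over {i,j}
        push_neg at hco
        have hcover : 𝒜 ⊆ 𝒜.filter (fun A => A ∩ {i, j} = ∅)
            ∪ 𝒜.filter (fun A => A ∩ {i, j} = {i})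
            ∪ 𝒜.filter (fun A => A ∩ {i, j} = {j}) := by
          intro A hA
          have hnotboth := hco A hA
          by_cases hiA : i ∈ A
          · have hjA : j ∉ A := hnotboth hiA
            apply Finset.mem_union_left
            apply Finset.mem_union_right
            refine Finset.mem_filter.mpr ⟨hA, ?_⟩
            ext x
            simp only [Finset.mem_inter, Finset.mem_insert, Finset.mem_singleton]
            constructor
            · rintro ⟨hxA, hx | hx⟩
              · exact hx
              · exact absurd (hx ▸ hxA) hjA
            · rintro rfl; exact ⟨hiA, Or.inl rfl⟩
          · by_cases hjA : j ∈ A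
            · apply Finset.mem_union_right
              refine Finset.mem_filter.mpr ⟨hA, ?_⟩
              ext x
              simp only [Finset.mem_inter, Finset.mem_insert, Finset.mem_singleton]
              constructor
              · rintro ⟨hxA, hx | hx⟩
                · exact absurd (hx ▸ hxA) hiA
                · exact hx
              · rintro rfl; exact ⟨hjA, Or.inr rfl⟩
            · apply Finset.mem_union_left
              apply Finset.mem_union_left
              refine Finset.mem_filter.mpr ⟨hA, ?_⟩
              ext x
              simp only [Finset.mem_inter, Finset.mem_insert, Finset.mem_singleton,
                Finset.notMem_empty, iff_false, not_and]
              rintro hxA (rfl | rfl)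
              · exact hiA hxA
              · exact hjA hxA
        have hijne : ({i, j} : Finset ι).Nonempty := ⟨i, by simp⟩
        have hc2 : ({i, j} : Finset ι).card = 2 := by
          rw [Finset.card_insert_of_notMem (Finset.notMem_singleton.mpr (Ne.symm hji)),
            Finset.card_singleton]
        have hb1 := FIB {i, j} ∅ hijI hijne (Finset.empty_subset _)
        have hb2 := FIB {i, j} {i} hijI hijne (by intro x hx; simp at hx; simp [hx])
        have hb3 := FIB {i, j} {j} hijI hijne (by intro x hx; simp at hx; simp [hx])
        rw [hc2] at hb1 hb2 hb3
        have hcards : (𝒜.card : ℝ) ≤ ((𝒜.filter (fun A => A ∩ {i, j} = ∅)).card : ℝ)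
            + ((𝒜.filter (fun A => A ∩ {i, j} = {i})).card : ℝ)
            + ((𝒜.filter (fun A => A ∩ {i, j} = {j})).card : ℝ) := by
          have hcc := Finset.card_le_card hcover
          have h2 := Finset.card_union_le (𝒜.filter (fun A => A ∩ ({i, j} : Finset ι) = ∅)
            ∪ 𝒜.filter (fun A => A ∩ {i, j} = {i})) (𝒜.filter (fun A => A ∩ {i, j} = {j}))
          have h3 := Finset.card_union_le (𝒜.filter (fun A => A ∩ ({i, j} : Finset ι) = ∅))
            (𝒜.filter (fun A => A ∩ {i, j} = {i}))
          have : 𝒜.card ≤ (𝒜.filter (fun A => A ∩ ({i, j} : Finset ι) = ∅)).card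
              + (𝒜.filter (fun A => A ∩ {i, j} = {i})).card
              + (𝒜.filter (fun A => A ∩ {i, j} = {j})).card := by omega
          exact_mod_cast this
        have hXm : Xc ^ (m - 2) * Xc ^ 2 = Xc ^ m := by
          rw [← pow_add]; congr 1; omega
        have hX2 : (3:ℝ) ≤ Xc ^ 2 := by nlinarith [Xc_lb]
        have hpos : (0:ℝ) < Xc ^ (m - 2) := lt_of_lt_of_le one_pos (one_le_Xc_pow _)
        calc (𝒜.card : ℝ) ≤ 3 * (2 * Xc ^ (m - 2)) := by linarith
          _ ≤ 2 * Xc ^ m := by nlinarith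
    · -- single atom i
      push_neg at hj
      have hcover : 𝒜 ⊆ 𝒜.filter (fun A => A ∩ {i} = ∅)
          ∪ 𝒜.filter (fun A => A ∩ {i} = {i}) := by
        intro A hA
        by_cases hiA : i ∈ A
        · apply Finset.mem_union_right
          refine Finset.mem_filter.mpr ⟨hA, ?_⟩
          ext x
          simp only [Finset.mem_inter, Finset.mem_singleton]
          constructor
          · rintro ⟨-, hx⟩; exact hx
          · rintro rfl; exact ⟨hiA, rfl⟩
        · apply Finset.mem_union_left
          refine Finset.mem_filter.mpr ⟨hA, ?_⟩
          ext x
          simp only [Finset.mem_inter, Finset.mem_singleton, Finset.notMem_empty, iff_false,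
            not_and]
          rintro hxA rfl
          exact hiA hxA
      have hone : (𝒜.filter (fun A => A ∩ {i} = ∅)).card ≤ 1 := by
        have hsb : 𝒜.filter (fun A => A ∩ {i} = ∅) ⊆ {∅} := by
          intro A hA
          obtain ⟨hA𝒜, hAi⟩ := Finset.mem_filter.mp hA
          rw [Finset.mem_singleton]
          by_contra hne
          have hAne : A.Nonempty := Finset.nonempty_iff_ne_empty.mpr hne
          obtain ⟨l, hlA, hl𝒜⟩ := hH A hA𝒜 hAne
          have : l = i := hj l hl𝒜
          subst this
          have : l ∈ A ∩ {l} := Finset.mem_inter.mpr ⟨hlA, Finset.mem_singleton_self l⟩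
          rw [hAi] at this
          exact Finset.notMem_empty l this
        calc (𝒜.filter (fun A => A ∩ {i} = ∅)).card ≤ ({∅} : Finset (Finset ι)).card :=
              Finset.card_le_card hsb
          _ = 1 := Finset.card_singleton _
      have hb2 := FIB {i} {i} (by simpa using hiI) ⟨i, Finset.mem_singleton_self i⟩ le_rfl
      rw [Finset.card_singleton] at hb2
      have hcards : (𝒜.card : ℝ) ≤ 1 + ((𝒜.filter (fun A => A ∩ {i} = {i})).card : ℝ) := by
        have hcc := Finset.card_le_card hcover
        have h2 := Finset.card_union_le (𝒜.filter (fun A => A ∩ ({i} : Finset ι) = ∅))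
          (𝒜.filter (fun A => A ∩ {i} = {i}))
        have : 𝒜.card ≤ 1 + (𝒜.filter (fun A => A ∩ {i} = {i})).card := by omega
        exact_mod_cast this
      have hXm : Xc ^ (m - 1) * Xc ^ 1 = Xc ^ m := by
        rw [← pow_add]; congr 1; omega
      have hpos : (1:ℝ) ≤ Xc ^ (m - 1) := one_le_Xc_pow _
      calc (𝒜.card : ℝ) ≤ 1 + 2 * Xc ^ (m - 1) := by linarith
        _ ≤ 2 * Xc ^ m := by nlinarith [Xc_lb]
  · -- ¬H : there is a minimal member of size ≥ 2
    push_neg at hH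
    obtain ⟨A₀, hA₀mem, hA₀ne, hA₀atoms⟩ := hH
    have hSne : (𝒜.filter (fun B => B.Nonempty ∧ B ⊆ A₀)).Nonempty :=
      ⟨A₀, by simp [hA₀mem, hA₀ne]⟩
    obtain ⟨w, hwS, hwmin⟩ := Finset.exists_min_image _ Finset.card hSne
    simp only [Finset.mem_filter] at hwS
    obtain ⟨hw𝒜, hwne, hwA₀⟩ := hwS
    -- w is globally minimal
    have hmin : ∀ C ∈ 𝒜, C ⊆ w → C = ∅ ∨ C = w := by
      intro C hC hCw
      by_cases hCne : C.Nonempty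
      · right
        have hCS : C ∈ 𝒜.filter (fun B => B.Nonempty ∧ B ⊆ A₀) := by
          simp [hC, hCne, hCw.trans hwA₀]
        have := hwmin C hCS
        exact Finset.eq_of_subset_of_card_le hCw this
      · left; rwa [Finset.not_nonempty_iff_eq_empty] at hCne
    have hw2 : 2 ≤ w.card := by
      rcases Nat.lt_or_ge w.card 2 with h | h
      · exfalso
        interval_cases hwc : w.card
        · exact hwne.ne_empty (Finset.card_eq_zero.mp hwc)
        · obtain ⟨l, hl⟩ := Finset.card_eq_one.mp hwc
          have hlA₀ : l ∈ A₀ := hwA₀ (hl ▸ Finset.mem_singleton_self l)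
          exact hA₀atoms l hlA₀ (hl ▸ hw𝒜)
      · exact h
    have hwI : w ⊆ I := hsub _ hw𝒜
    have hwm : w.card ≤ m := Finset.card_le_card hwI
    -- cover by the two fibers over w
    have hcover : 𝒜 ⊆ 𝒜.filter (fun A => A ∩ w = ∅) ∪ 𝒜.filter (fun A => A ∩ w = w) := by
      intro A hA
      have hAw : A ∩ w ∈ 𝒜 := hcl _ hA _ hw𝒜
      rcases hmin _ hAw Finset.inter_subset_right with h | h
      · exact Finset.mem_union_left _ (Finset.mem_filter.mpr ⟨hA, h⟩)
      · exact Finset.mem_union_right _ (Finset.mem_filter.mpr ⟨hA, h⟩)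
    have hb1 := FIB w ∅ hwI hwne (Finset.empty_subset w)
    have hb2 := FIB w w hwI hwne le_rfl
    have hcards : (𝒜.card : ℝ) ≤ ((𝒜.filter (fun A => A ∩ w = ∅)).card : ℝ)
        + ((𝒜.filter (fun A => A ∩ w = w)).card : ℝ) := by
      have := Finset.card_le_card hcover
      have h2 := Finset.card_union_le (𝒜.filter (fun A => A ∩ w = ∅))
        (𝒜.filter (fun A => A ∩ w = w))
      push_cast
      exact_mod_cast le_trans this h2
    have hpow : Xc ^ (m - w.card) ≤ Xc ^ (m - 2) := Xc_pow_mono (by omega)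
    have hXm : Xc ^ (m - 2) * Xc ^ 2 = Xc ^ m := by
      rw [← pow_add]
      congr 1
      omega
    have hX2 : (2:ℝ) ≤ Xc ^ 2 := by nlinarith [Xc_lb]
    have hpos : (0:ℝ) < Xc ^ (m - 2) := lt_of_lt_of_le one_pos (one_le_Xc_pow _)
    calc (𝒜.card : ℝ) ≤ 2 * Xc ^ (m - w.card) + 2 * Xc ^ (m - w.card) := by linarith
      _ ≤ 4 * Xc ^ (m - 2) := by linarith
      _ ≤ 2 * Xc ^ m := by nlinarith


lemma core : ∀ (n : ℕ) (I : Finset ι) (𝒜 : Finset (Finset ι)) (c : ι → ℝ) (γ : ℝ),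
    I.card ≤ n → GoodCfg I 𝒜 c γ → (𝒜.card : ℝ) ≤ 2 * Xc ^ I.card := by
  intro n
  induction n with
  | zero =>
    intro I 𝒜 c γ hn hG
    have hI : I = ∅ := Finset.card_eq_zero.mp (Nat.le_zero.mp hn)
    have hsb : 𝒜 ⊆ {∅} := by
      intro A hA
      have := hG.1 A hA
      rw [hI, Finset.subset_empty] at this
      simp [this]
    have := Finset.card_le_card hsb
    rw [Finset.card_singleton] at this
    calc (𝒜.card : ℝ) ≤ 1 := by exact_mod_cast this
      _ ≤ 2 * Xc ^ I.card := by nlinarith [one_le_Xc_pow I.card]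
  | succ n IH =>
    intro I 𝒜 c γ hn hG
    rcases Finset.eq_empty_or_nonempty 𝒜 with h𝒜 | h𝒜
    · rw [h𝒜]
      simp only [Finset.card_empty, Nat.cast_zero]
      nlinarith [one_le_Xc_pow I.card]
    · obtain ⟨hsub, hc, hcl, hval⟩ := hG
      have hG' : GoodCfg I 𝒜 c γ := ⟨hsub, hc, hcl, hval⟩
      set A₀ := 𝒜.inf' h𝒜 id with hA₀def
      have hA₀𝒜 : A₀ ∈ 𝒜 := by
        apply Finset.inf'_mem (↑𝒜 : Set (Finset ι))
          (fun x hx y hy => hcl x hx y hy) 𝒜 h𝒜 id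
        intro A hA; exact hA
      rcases Finset.eq_empty_or_nonempty A₀ with hA₀e | hA₀ne
      · -- ∅ ∈ 𝒜, so γ = 0 or γ = −1
        have h0 : (0:ℝ) = γ ∨ (0:ℝ) = γ + 1 := by
          have := hval A₀ hA₀𝒜
          rw [hA₀e, Finset.sum_empty] at this
          tauto
        rcases h0 with h0 | h0
        · exact core_zero IH I 𝒜 c hn (h0 ▸ hG')
        · -- γ = −1 : negate the weights
          have hGneg : GoodCfg I 𝒜 (fun i => -c i) 0 := by
            refine ⟨hsub, ?_, hcl, ?_⟩
            · intro i hi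
              simpa using hc i hi
            · intro A hA
              rcases hval A hA with h | h
              · right
                rw [Finset.sum_neg_distrib]  -- maybe wrong name
                rw [h]; linarith
              · left
                rw [Finset.sum_neg_distrib]
                rw [h]; linarith
          exact core_zero IH I 𝒜 (fun i => -c i) hn hGneg
      · -- A₀ nonempty: the whole family is a single fiber over A₀
        have hA₀I : A₀ ⊆ I := hsub _ hA₀𝒜
        have hfix : 𝒜.filter (fun A => A ∩ A₀ = A₀) = 𝒜 := by
          apply Finset.filter_true_of_mem
          intro A hA
          exact Finset.inter_eq_right.mpr (Finset.inf'_le id hA)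
        obtain ⟨hcard, hgood⟩ := fiber_good hG' A₀ A₀ hA₀I le_rfl
        have hle : (I \ A₀).card ≤ n := by
          rw [Finset.card_sdiff_of_subset hA₀I]
          have h1 : 1 ≤ A₀.card := Finset.card_pos.mpr hA₀ne
          have h2 : A₀.card ≤ I.card := Finset.card_le_card hA₀I
          omega
        have hIH := IH _ _ _ _ hle hgood
        have hmono : Xc ^ (I \ A₀).card ≤ Xc ^ I.card :=
          Xc_pow_mono (Finset.card_le_card (Finset.sdiff_subset))
        calc (𝒜.card : ℝ)
            = ((𝒜.filter (fun A => A ∩ A₀ = A₀)).card : ℝ) := by rw [hfix]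
          _ = (((𝒜.filter (fun A => A ∩ A₀ = A₀)).image (fun A => A \ A₀)).card : ℝ) := by
              exact_mod_cast hcard
          _ ≤ 2 * Xc ^ (I \ A₀).card := hIH
          _ ≤ 2 * Xc ^ I.card := by linarith


end CoreDef

lemma andR_eq {n : ℕ} (S : Finset (Fin n)) (x : Fin n → Bool) :
    andR S x = if andB S x = true then (1:ℝ) else 0 := by
  by_cases h : ∀ i ∈ S, x i = true
  · have h1 : andR S x = 1 := by
      rw [andR]
      apply Finset.prod_eq_one
      intro i hi
      rw [h i hi]
      simp
    rw [h1, if_pos]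
    simp only [andB, decide_eq_true_eq]
    exact h
  · push_neg at h
    obtain ⟨i, hi, hxi⟩ := h
    have hxif : x i = false := by
      cases hx : x i
      · rfl
      · exact absurd hx hxi
    have h0 : andR S x = 0 := by
      rw [andR]
      apply Finset.prod_eq_zero hi
      rw [hxif]
      simp
    rw [h0, if_neg]
    simp only [andB, decide_eq_true_eq]
    push_neg
    exact ⟨i, hi, hxi⟩

/-- For every Boolean function `f`, the Möbius pattern complexity satisfies
`Pat(f) ≤ 2 · 6^{spar(f)/3}`. -/
theorem stmt10 (n : ℕ) (f : (Fin n → Bool) → Bool) (c : Finset (Fin n) → ℝ)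
    (Sf : Finset (Finset (Fin n))) (hmem : ∀ S, S ∈ Sf ↔ c S ≠ 0)
    (hf : ∀ x, (if f x then (1 : ℝ) else 0) = ∑ S : Finset (Fin n), c S * andR S x) :
    (((Finset.univ.image
        (fun x : Fin n → Bool => fun S : {S // S ∈ Sf} => andB S.1 x)).card : ℝ)) ≤
      2 * (6 : ℝ) ^ ((Sf.card : ℝ) / 3) := by
  classical
  set g : (Fin n → Bool) → Finset (Finset (Fin n)) :=
    fun x => Sf.filter (fun S => andB S x = true) with hg
  set V := (Finset.univ : Finset (Fin n → Bool)).image g with hV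
  -- step A: the pattern count equals the cardinality of V
  have hfilter_eq : ∀ x : Fin n → Bool,
      (Sf.filter (fun S => ∃ h : S ∈ Sf, andB S x = true)) = g x := by
    intro x
    apply Finset.filter_congr
    intro S hS
    simp [hS]
  have hstep : (Finset.univ.image
      (fun x : Fin n → Bool => fun S : {S // S ∈ Sf} => andB S.1 x)).card ≤ V.card := by
    apply Finset.card_le_card_of_injOn
      (fun p => Sf.filter (fun S => ∃ h : S ∈ Sf, p ⟨S, h⟩ = true))
    · intro p hp
      obtain ⟨x, -, rfl⟩ := Finset.mem_image.mp hp
      rw [hV]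
      beta_reduce
      rw [hfilter_eq x]
      exact Finset.mem_image_of_mem _ (Finset.mem_univ x)
    · intro p₁ hp₁ p₂ hp₂ he
      obtain ⟨x, -, rfl⟩ := Finset.mem_image.mp hp₁
      obtain ⟨y, -, rfl⟩ := Finset.mem_image.mp hp₂
      simp only at he
      rw [hfilter_eq x, hfilter_eq y] at he
      funext ⟨S, hS⟩
      have hx : S ∈ g x ↔ S ∈ g y := by rw [he]
      simp only [hg, Finset.mem_filter, hS, true_and] at hx
      cases hbx : andB S x <;> cases hby : andB S y
      · rfl
      · rw [hbx, hby] at hx; simp at hx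
      · rw [hbx, hby] at hx; simp at hx
      · rfl
  -- step B: V is a good configuration
  have hGood : GoodCfg Sf V c 0 := by
    refine ⟨?_, ?_, ?_, ?_⟩
    · intro A hA
      obtain ⟨x, -, rfl⟩ := Finset.mem_image.mp hA
      exact Finset.filter_subset _ _
    · intro S hS
      exact (hmem S).mp hS
    · intro A hA B hB
      obtain ⟨x, -, rfl⟩ := Finset.mem_image.mp hA
      obtain ⟨y, -, rfl⟩ := Finset.mem_image.mp hB
      have hinter : g x ∩ g y = g (fun i => x i && y i) := by
        ext S
        simp only [hg, Finset.mem_inter, Finset.mem_filter, andB, decide_eq_true_eq]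
        constructor
        · rintro ⟨⟨h1, h2⟩, ⟨-, h3⟩⟩
          refine ⟨h1, fun i hi => ?_⟩
          rw [h2 i hi, h3 i hi]
          rfl
        · rintro ⟨h1, h2⟩
          refine ⟨⟨h1, fun i hi => ?_⟩, ⟨h1, fun i hi => ?_⟩⟩
          · exact (Bool.and_eq_true _ _).mp (h2 i hi) |>.1
          · exact (Bool.and_eq_true _ _).mp (h2 i hi) |>.2
      rw [hinter]
      exact Finset.mem_image_of_mem _ (Finset.mem_univ _)
    · intro A hA
      obtain ⟨x, -, rfl⟩ := Finset.mem_image.mp hA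
      have hsum : ∑ S ∈ g x, c S = (if f x then (1:ℝ) else 0) := by
        rw [hf x]
        have e1 : ∀ S : Finset (Fin n), c S * andR S x
            = if andB S x = true then c S else 0 := by
          intro S
          rw [andR_eq]
          split <;> simp
        calc ∑ S ∈ g x, c S
            = ∑ S ∈ Finset.univ.filter (fun S => andB S x = true), c S := by
              apply Finset.sum_subset
              · intro S hS
                simp only [hg, Finset.mem_filter] at hS
                simp [hS.2]
              · intro S hS hSg
                simp only [Finset.mem_filter, Finset.mem_univ, true_and] at hS
                simp only [hg, Finset.mem_filter, hS, and_true] at hSg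
                by_contra hc0
                exact hSg ((hmem S).mpr hc0)
          _ = ∑ S : Finset (Fin n), (if andB S x = true then c S else 0) :=
              Finset.sum_filter _ _
          _ = ∑ S : Finset (Fin n), c S * andR S x := by
              refine Finset.sum_congr rfl (fun S _ => ?_)
              rw [e1]
      rw [hsum]
      cases hfx : f x
      · left; simp
      · right; simp
  -- step C: apply the core bound
  have hcore := core Sf.card Sf V c 0 le_rfl hGood
  have hXm : Xc ^ Sf.card = (6:ℝ) ^ ((Sf.card : ℝ) / 3) := by
    rw [Xc, ← Real.rpow_natCast ((6:ℝ) ^ ((1:ℝ)/3)) Sf.card,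
      ← Real.rpow_mul (by norm_num : (0:ℝ) ≤ 6)]
    congr 1
    ring
  have hfinal : ((Finset.univ.image
      (fun x : Fin n → Bool => fun S : {S // S ∈ Sf} => andB S.1 x)).card : ℝ)
      ≤ (V.card : ℝ) := by exact_mod_cast hstep
  rw [← hXm]
  exact le_trans hfinal hcore
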